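/- Let Ω ⊆ ℝ^n be open and let (E_m) be a sequence of measurable sets, each K-outward minimizing in Ω and with Per_K(E_m,Ω) < ∞, such that χ_{E_m} → χ_E in L¹(ℝ^n) for some measurable set E with Per_K(E,Ω) < ∞. Then E is K-outward minimizing in Ω. -/

import Mathlib

open MeasureTheory Set Filter Metric Topology
open scoped ENNReal Pointwise

noncomputable section

abbrev Euc (n : ℕ) := EuclideanSpace ℝ (Fin n)

/-- Admissible kernel: measurable, nonnegative and even away from the origin,
with `∫ min(1,|x|) K(x) dx < ∞`. -/
def KernelOK {n : ℕ} (K : Euc n → ℝ) : Prop :=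
  Measurable K ∧ (∀ x : Euc n, x ≠ 0 → 0 ≤ K x) ∧ (∀ x : Euc n, x ≠ 0 → K (-x) = K x) ∧
    (∫⁻ x : Euc n, ENNReal.ofReal (min 1 ‖x‖ * K x)) < ⊤

/-- The `K`-perimeter of `E` in `Ω`. -/
def perK {n : ℕ} (K : Euc n → ℝ) (E Ω : Set (Euc n)) : ℝ≥0∞ :=
  (∫⁻ x in E, ∫⁻ y in Ω \ E, ENNReal.ofReal (K (x - y))) +
  (∫⁻ x in E ∩ Ω, ∫⁻ y in (Ω ∪ E)ᶜ, ENNReal.ofReal (K (x - y)))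

/-- The (total) `K`-perimeter of `E`. -/
def perKtot {n : ℕ} (K : Euc n → ℝ) (E : Set (Euc n)) : ℝ≥0∞ :=
  ∫⁻ x in E, ∫⁻ y in Eᶜ, ENNReal.ofReal (K (x - y))

/-- `A` is compactly contained in `Ω`. -/
def CptIn {n : ℕ} (A Ω : Set (Euc n)) : Prop :=
  IsCompact (closure A) ∧ closure A ⊆ Ω

/-- `E` is `K`-outward minimizing in `Ω`. -/
def OutMin {n : ℕ} (K : Euc n → ℝ) (E Ω : Set (Euc n)) : Prop :=
  ∀ F : Set (Euc n), MeasurableSet F → E ⊆ F → CptIn (F \ E) Ω →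
    perK K E Ω ≤ perK K F Ω

/-- `E` is strongly `K`-outward minimizing in `Ω` with constant `δ`. -/
def StrongOutMin {n : ℕ} (K : Euc n → ℝ) (δ : ℝ) (E Ω : Set (Euc n)) : Prop :=
  ∀ F : Set (Euc n), MeasurableSet F → E ⊆ F → CptIn (F \ E) Ω →
    perK K E Ω + ENNReal.ofReal δ * volume (F \ E) ≤ perK K F Ω

end
noncomputable section
open MeasureTheory Set Filter Metric Topology
open scoped ENNReal Pointwise

/-- The truncated `K`-curvature of `G` at `x`, with truncation parameter `ε`:
`∫_{ℝⁿ∖B(x,ε)} (χ_{Gᶜ}(y) − χ_G(y)) K(x−y) dy`. -/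
def truncCurv {n : ℕ} (K : Euc n → ℝ) (G : Set (Euc n)) (x : Euc n) (ε : ℝ) : ℝ :=
  ∫ y in (Metric.ball x ε)ᶜ,
    ((Gᶜ).indicator (fun _ => (1:ℝ)) y - G.indicator (fun _ => (1:ℝ)) y) * K (x - y)

/-- `G` has compact boundary of class `C^{1,1}`: the boundary is compact, and `G` is the
sublevel set of a `C^1` function with Lipschitz gradient which is nondegenerate on the
boundary. -/
def HasCptC11Boundary {n : ℕ} (G : Set (Euc n)) : Prop :=
  IsCompact (frontier G) ∧
  ∃ φ : Euc n → ℝ, ContDiff ℝ 1 φ ∧ (∃ L : NNReal, LipschitzWith L (fderiv ℝ φ)) ∧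
    G = {x | φ x ≤ 0} ∧ frontier G = {x | φ x = 0} ∧
    ∀ x ∈ frontier G, fderiv ℝ φ x ≠ 0

/-- `H^K_A(x) ≥ c` in the viscosity sense: every set `G` with compact `C^{1,1}` boundary
with `G ⊆ A` and `x ∈ ∂G` has `K`-curvature at least `c` at `x` (the curvature being the
limit of the truncated curvatures). -/
def ViscCurvGE {n : ℕ} (K : Euc n → ℝ) (A : Set (Euc n)) (x : Euc n) (c : ℝ) : Prop :=
  ∀ G : Set (Euc n), HasCptC11Boundary G → G ⊆ A → x ∈ frontier G →
    ∀ L : ℝ, Tendsto (truncCurv K G x) (𝓝[>] (0:ℝ)) (𝓝 L) → c ≤ L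

/-- Signed distance function from `E` (positive inside). -/
def sgnDist {n : ℕ} (E : Set (Euc n)) (x : Euc n) : ℝ :=
  Metric.infDist x Eᶜ - Metric.infDist x E

/-- The Almgren–Taylor–Wang energy `Per_K(G) − (1/h)∫_G d_E`. -/
def atwEnergy {n : ℕ} (K : Euc n → ℝ) (E : Set (Euc n)) (h : ℝ) (G : Set (Euc n)) : ℝ :=
  (perKtot K G).toReal - (1/h) * ∫ x in G, sgnDist E x

/-- `T` is an ATW minimizer for `E` at step `h`: it minimizes the ATW energy among all
measurable sets (competitors with infinite energy being irrelevant). -/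
def ATWMin {n : ℕ} (K : Euc n → ℝ) (E : Set (Euc n)) (h : ℝ) (T : Set (Euc n)) : Prop :=
  MeasurableSet T ∧ perKtot K T < ⊤ ∧ IntegrableOn (sgnDist E) T ∧
  ∀ G : Set (Euc n), MeasurableSet G → perKtot K G < ⊤ → IntegrableOn (sgnDist E) G →
    atwEnergy K E h T ≤ atwEnergy K E h G

/-- The set of Lebesgue density-one points of `T`. -/
def densityPts {n : ℕ} (T : Set (Euc n)) : Set (Euc n) :=
  {x | Tendsto (fun ρ : ℝ =>
      volume (T ∩ Metric.closedBall x ρ) / volume (Metric.closedBall x ρ))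
    (𝓝[>] (0:ℝ)) (𝓝 1)}

/-- The nonlocal functional `J_K(v) = ½∬ |v(x)−v(y)| K(x−y) dx dy`. -/
def JK {n : ℕ} (K : Euc n → ℝ) (v : Euc n → ℝ) : ℝ≥0∞ :=
  (1/2 : ℝ≥0∞) * ∫⁻ x : Euc n, ∫⁻ y : Euc n,
    ENNReal.ofReal |v x - v y| * ENNReal.ofReal (K (x - y))

end

open MeasureTheory Set Filter Metric Topology
open scoped ENNReal


section OutMinAux
open MeasureTheory Set Filter Metric Topology
open scoped ENNReal

namespace OutMinAux
variable {n : ℕ} (K : Euc n → ℝ)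

/-- The interaction functional `L(A,B) = ∫_A ∫_B K(x-y)`. -/
noncomputable def interK (A B : Set (Euc n)) : ℝ≥0∞ :=
  ∫⁻ x in A, ∫⁻ y in B, ENNReal.ofReal (K (x - y))

/-- The kernel as a function on the product space. -/
noncomputable def KK : Euc n × Euc n → ℝ≥0∞ := fun p => ENNReal.ofReal (K (p.1 - p.2))

lemma measKK (hK : Measurable K) : Measurable (KK K (n := n)) :=
  (hK.comp (measurable_fst.sub measurable_snd)).ennreal_ofReal

/-- The interaction functional as an integral over the product space. -/
noncomputable def pint (S : Set (Euc n × Euc n)) : ℝ≥0∞ :=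
  ∫⁻ p, S.indicator (KK K) p ∂((volume : Measure (Euc n)).prod volume)

lemma interK_eq_pint (hK : Measurable K) {A B : Set (Euc n)}
    (hA : MeasurableSet A) (hB : MeasurableSet B) :
    interK K A B = pint K (A ×ˢ B) := by
  rw [pint, lintegral_prod _ (((measKK K hK).indicator (hA.prod hB)).aemeasurable)]
  rw [interK, ← lintegral_indicator hA]
  refine lintegral_congr fun x => ?_
  by_cases hx : x ∈ A
  · rw [indicator_of_mem hx, ← lintegral_indicator hB]
    refine lintegral_congr fun y => ?_
    by_cases hy : y ∈ B
    · rw [indicator_of_mem hy, indicator_of_mem (mk_mem_prod hx hy)]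
      rfl
    · rw [indicator_of_notMem hy, indicator_of_notMem (by simp [hy] : (x,y) ∉ A ×ˢ B)]
  · rw [indicator_of_notMem hx]
    have : ∀ y : Euc n, (A ×ˢ B).indicator (KK K) (x, y) = 0 := fun y =>
      indicator_of_notMem (by simp [hx]) _
    simp [this]

variable {K}

lemma pint_mono {S T : Set (Euc n × Euc n)} (h : S ⊆ T) : pint K S ≤ pint K T :=
  lintegral_mono fun p => indicator_le_indicator_of_subset h (fun _ => zero_le) p

lemma interK_mono_right {A B C : Set (Euc n)} (h : B ⊆ C) :
    interK K A B ≤ interK K A C :=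
  lintegral_mono fun _ => lintegral_mono' (Measure.restrict_mono h le_rfl) le_rfl

lemma pint_union {S T : Set (Euc n × Euc n)} (hK : Measurable K)
    (hS : MeasurableSet S) (hd : Disjoint S T) :
    pint K (S ∪ T) = pint K S + pint K T := by
  unfold pint
  rw [← lintegral_add_left ((measKK K hK).indicator hS)]
  exact lintegral_congr fun p => by
    rw [indicator_union_of_disjoint hd]

lemma interK_union_right (hK : Measurable K) {A B C : Set (Euc n)}
    (hA : MeasurableSet A) (hB : MeasurableSet B) (hC : MeasurableSet C)
    (hd : Disjoint B C) :
    interK K A (B ∪ C) = interK K A B + interK K A C := by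
  rw [interK_eq_pint K hK hA (hB.union hC), interK_eq_pint K hK hA hB,
    interK_eq_pint K hK hA hC, prod_union,
    pint_union hK (hA.prod hB) (by
      rw [Set.disjoint_left]
      rintro ⟨x, y⟩ h1 h2
      exact disjoint_left.1 hd h1.2 h2.2)]

lemma interK_union_left (hK : Measurable K) {A B C : Set (Euc n)}
    (hA : MeasurableSet A) (hB : MeasurableSet B) (hC : MeasurableSet C)
    (hd : Disjoint A B) :
    interK K (A ∪ B) C = interK K A C + interK K B C := by
  rw [interK_eq_pint K hK (hA.union hB) hC, interK_eq_pint K hK hA hC,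
    interK_eq_pint K hK hB hC, union_prod,
    pint_union hK (hA.prod hC) (by
      rw [Set.disjoint_left]
      rintro ⟨x, y⟩ h1 h2
      exact disjoint_left.1 hd h1.1 h2.1)]

lemma interK_symm (hK : Measurable K) (hev : ∀ x : Euc n, x ≠ 0 → K (-x) = K x)
    {A B : Set (Euc n)} (hA : MeasurableSet A) (hB : MeasurableSet B) :
    interK K A B = interK K B A := by
  rw [interK_eq_pint K hK hA hB, interK_eq_pint K hK hB hA, pint, pint,
    ← lintegral_prod_swap ((B ×ˢ A).indicator (KK K))]
  refine lintegral_congr fun p => ?_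
  have hkk : KK K p = KK K p.swap := by
    show ENNReal.ofReal (K (p.1 - p.2)) = ENNReal.ofReal (K (p.2 - p.1))
    by_cases hp : p.1 = p.2
    · rw [hp]
    · rw [show p.2 - p.1 = -(p.1 - p.2) by abel, hev _ (sub_ne_zero.2 hp)]
  by_cases hmem : p ∈ A ×ˢ B
  · have h2 : p.swap ∈ B ×ˢ A := ⟨hmem.2, hmem.1⟩
    rw [indicator_of_mem hmem, indicator_of_mem h2, hkk]
  · have h2 : p.swap ∉ B ×ˢ A := fun h => hmem ⟨h.2, h.1⟩
    rw [indicator_of_notMem hmem, indicator_of_notMem h2]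

lemma perK_eq (E Ω : Set (Euc n)) :
    perK K E Ω = interK K E (Ω \ E) + interK K (E ∩ Ω) (Ω ∪ E)ᶜ := rfl

lemma perK_identity (hK : Measurable K) {E F Ω : Set (Euc n)}
    (hE : MeasurableSet E) (hF : MeasurableSet F) (hΩ : MeasurableSet Ω)
    (hEF : E ⊆ F) (hD : F \ E ⊆ Ω) :
    perK K F Ω + interK K E (F \ E) = perK K E Ω + interK K (F \ E) Fᶜ := by
  set D := F \ E with hDdef
  have hDm : MeasurableSet D := hF.diff hE
  have h1 : Ω \ E = (Ω \ F) ∪ D := by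
    ext x
    constructor
    · rintro ⟨hxΩ, hxE⟩
      by_cases hxF : x ∈ F
      · exact Or.inr ⟨hxF, hxE⟩
      · exact Or.inl ⟨hxΩ, hxF⟩
    · rintro (⟨ha, hb⟩ | ⟨ha, hb⟩)
      · exact ⟨ha, fun h => hb (hEF h)⟩
      · exact ⟨hD ⟨ha, hb⟩, hb⟩
  have h2 : F = E ∪ D := (union_diff_cancel hEF).symm
  have h3 : F ∩ Ω = (E ∩ Ω) ∪ D := by
    ext x
    constructor
    · rintro ⟨hxF, hxΩ⟩
      by_cases hxE : x ∈ E
      · exact Or.inl ⟨hxE, hxΩ⟩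
      · exact Or.inr ⟨hxF, hxE⟩
    · rintro (⟨ha, hb⟩ | hx)
      · exact ⟨hEF ha, hb⟩
      · exact ⟨hx.1, hD hx⟩
  have h4 : Ω ∪ F = Ω ∪ E := by
    apply Subset.antisymm
    · rintro x (hx | hx)
      · exact Or.inl hx
      · by_cases hxE : x ∈ E
        · exact Or.inr hxE
        · exact Or.inl (hD ⟨hx, hxE⟩)
    · exact union_subset_union_right Ω hEF
  have h5 : Fᶜ = (Ω \ F) ∪ (Ω ∪ E)ᶜ := by
    ext x
    constructor
    · intro hx
      by_cases hxΩ : x ∈ Ω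
      · exact Or.inl ⟨hxΩ, hx⟩
      · exact Or.inr (fun h => h.elim hxΩ (fun hE' => hx (hEF hE')))
    · rintro (⟨_, hb⟩ | hx)
      · exact hb
      · intro hxF
        by_cases hxE : x ∈ E
        · exact hx (Or.inr hxE)
        · exact hx (Or.inl (hD ⟨hxF, hxE⟩))
  have dΩF_D : Disjoint (Ω \ F) D := by
    rw [Set.disjoint_left]
    rintro x ⟨_, hxF⟩ hxD
    exact hxF hxD.1
  have dEΩ_D : Disjoint (E ∩ Ω) D := by
    rw [Set.disjoint_left]
    rintro x ⟨hxE, _⟩ hxD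
    exact hxD.2 hxE
  have dE_D : Disjoint E D := by
    rw [Set.disjoint_left]
    exact fun x hx hx2 => hx2.2 hx
  have key1 : interK K F (Ω \ F) = interK K E (Ω \ F) + interK K D (Ω \ F) := by
    have h := interK_union_left hK hE hDm (hΩ.diff hF) dE_D
    rwa [← h2] at h
  have key2 : interK K (F ∩ Ω) (Ω ∪ F)ᶜ
      = interK K (E ∩ Ω) (Ω ∪ E)ᶜ + interK K D (Ω ∪ E)ᶜ := by
    rw [h3, h4]
    exact interK_union_left hK (hE.inter hΩ) hDm (hΩ.union hE).compl dEΩ_D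
  have key3 : interK K E (Ω \ E) = interK K E (Ω \ F) + interK K E D := by
    rw [h1]
    exact interK_union_right hK hE (hΩ.diff hF) hDm dΩF_D
  have key4 : interK K D Fᶜ = interK K D (Ω \ F) + interK K D (Ω ∪ E)ᶜ := by
    rw [h5]
    refine interK_union_right hK hDm (hΩ.diff hF) (hΩ.union hE).compl ?_
    rw [Set.disjoint_left]
    rintro x ⟨ha, _⟩ hx
    exact hx (Or.inl ha)
  rw [perK_eq F Ω, perK_eq E Ω, key1, key2, key3, key4]
  ring

lemma outMin_key (hK : Measurable K) {E Ω : Set (Euc n)} (hmin : OutMin K E Ω)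
    (hE : MeasurableSet E) (hΩ : MeasurableSet Ω) (hfin : perK K E Ω < ⊤)
    {D : Set (Euc n)} (hDm : MeasurableSet D) (hdisj : Disjoint E D)
    (hcpt : CptIn D Ω) :
    interK K E D ≤ interK K D (E ∪ D)ᶜ := by
  set F := E ∪ D with hFdef
  have hFE : F \ E = D := by
    rw [hFdef, union_diff_left, hdisj.symm.sdiff_eq_left]
  have hper : perK K E Ω ≤ perK K F Ω := by
    refine hmin F (hE.union hDm) subset_union_left ?_
    rw [hFE]; exact hcpt
  have hid := perK_identity hK hE (hE.union hDm) hΩ subset_union_left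
    (by rw [hFE]; exact subset_closure.trans hcpt.2)
  rw [hFE] at hid
  rcases eq_top_or_lt_top (perK K F Ω) with htop | hlt
  · have : perK K E Ω + interK K D Fᶜ = ⊤ := by
      rw [← hid, htop, top_add]
    rcases ENNReal.add_eq_top.1 this with h | h
    · exact absurd h hfin.ne
    · exact h ▸ le_top
  · have hle : perK K F Ω + interK K E D ≤ perK K F Ω + interK K D Fᶜ := by
      rw [hid]
      exact add_le_add_left hper _
    exact (ENNReal.add_le_add_iff_left hlt.ne).1 hle

lemma ae_prod_pair {α : Type*} [MeasurableSpace α] {μ : Measure α} [SFinite μ]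
    {P : α → Prop} (h : ∀ᵐ x ∂μ, P x) : ∀ᵐ p ∂μ.prod μ, P p.1 ∧ P p.2 := by
  set N := toMeasurable μ {x | ¬ P x} with hN
  have hN0 : μ N = 0 := by
    rw [hN, measure_toMeasurable]
    exact h
  rw [ae_iff]
  refine measure_mono_null (fun p hp => ?_) (?_ : (μ.prod μ) (N ×ˢ univ ∪ univ ×ˢ N) = 0)
  · simp only [mem_setOf_eq, not_and_or] at hp
    rcases hp with hp | hp
    · exact Or.inl ⟨subset_toMeasurable _ _ hp, mem_univ _⟩
    · exact Or.inr ⟨mem_univ _, subset_toMeasurable _ _ hp⟩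
  · refine measure_union_null ?_ ?_ <;> rw [Measure.prod_prod, hN0] <;> simp

end OutMinAux
end OutMinAux

/-- stability of `K`-outward minimality under `L¹` convergence. -/
theorem outMin_L1_stable {n : ℕ} (K : Euc n → ℝ) (hK : KernelOK K)
    (Ω : Set (Euc n)) (hΩ : IsOpen Ω) (E : ℕ → Set (Euc n)) (E₀ : Set (Euc n))
    (hEm : ∀ m, MeasurableSet (E m)) (hE₀ : MeasurableSet E₀)
    (hmin : ∀ m, OutMin K (E m) Ω) (hfin : ∀ m, perK K (E m) Ω < ⊤)
    (hfin₀ : perK K E₀ Ω < ⊤)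
    (hconv : Tendsto (fun m => volume ((E m \ E₀) ∪ (E₀ \ E m))) atTop (𝓝 0)) :
    OutMin K E₀ Ω := by
  classical
  intro F hF hEF hcpt
  obtain ⟨hKmeas, hKpos, hKeven, hKint⟩ := hK
  have hΩm : MeasurableSet Ω := hΩ.measurableSet
  set D := F \ E₀ with hDdef
  have hDm : MeasurableSet D := hF.diff hE₀
  have hDsub : D ⊆ Ω := subset_closure.trans hcpt.2
  have hDdisj : Disjoint E₀ D := by
    rw [Set.disjoint_left]
    exact fun x hx hx2 => hx2.2 hx
  have hFeq : F = E₀ ∪ D := (union_diff_cancel hEF).symm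
  -- finiteness of `L(E₀, D)`
  have hED_fin : OutMinAux.interK K E₀ D < ⊤ := by
    refine lt_of_le_of_lt ?_ hfin₀
    rw [OutMinAux.perK_eq]
    refine le_trans (OutMinAux.interK_mono_right ?_) le_self_add
    exact fun x hx => ⟨hDsub hx, hx.2⟩
  -- the key interaction inequality
  suffices hkey : OutMinAux.interK K E₀ D ≤ OutMinAux.interK K D Fᶜ by
    have hid := OutMinAux.perK_identity hKmeas hE₀ hF hΩm hEF hDsub
    have hcalc : perK K E₀ Ω + OutMinAux.interK K E₀ D
        ≤ perK K F Ω + OutMinAux.interK K E₀ D := by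
      calc perK K E₀ Ω + OutMinAux.interK K E₀ D
          ≤ perK K E₀ Ω + OutMinAux.interK K D Fᶜ := add_le_add_right hkey _
        _ = perK K F Ω + OutMinAux.interK K E₀ D := hid.symm
    exact (ENNReal.add_le_add_iff_right hED_fin.ne).1 hcalc
  by_cases hDF : OutMinAux.interK K D Fᶜ = ⊤
  · exact hDF ▸ le_top
  -- convergence in measure of the indicator functions
  have hTIM : TendstoInMeasure (volume : Measure (Euc n))
      (fun m => (E m).indicator (fun _ => (1:ℝ))) atTop (E₀.indicator fun _ => (1:ℝ)) := by
    intro ε hε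
    refine tendsto_of_tendsto_of_tendsto_of_le_of_le tendsto_const_nhds hconv
      (fun m => zero_le) (fun m => measure_mono fun x hx => ?_)
    simp only [mem_setOf_eq] at hx
    by_contra hmem
    simp only [mem_union, mem_diff, not_or, not_and, not_not] at hmem
    have : (E m).indicator (fun _ => (1:ℝ)) x = E₀.indicator (fun _ => (1:ℝ)) x := by
      by_cases h1 : x ∈ E m
      · rw [indicator_of_mem h1, indicator_of_mem (hmem.1 h1)]
      · rw [indicator_of_notMem h1,
          indicator_of_notMem (fun h2 => h1 (hmem.2 h2))]
    rw [this, edist_self] at hx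
    exact absurd (lt_of_lt_of_le hε hx) (lt_irrefl 0)
  obtain ⟨ns, hns, hae⟩ := hTIM.exists_seq_tendsto_ae
  -- a.e. eventual agreement of memberships
  have hae' : ∀ᵐ x ∂(volume : Measure (Euc n)),
      ∀ᶠ k in atTop, (x ∈ E (ns k) ↔ x ∈ E₀) := by
    filter_upwards [hae] with x hx
    have hev := Metric.tendsto_nhds.mp hx (1/2) (by norm_num)
    filter_upwards [hev] with k hk
    by_cases h1 : x ∈ E (ns k) <;> by_cases h2 : x ∈ E₀ <;>
      simp only [indicator_of_mem, indicator_of_notMem, h1, h2, if_true, if_false,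
        Set.indicator_apply] at hk ⊢
    · rw [Real.dist_eq] at hk; norm_num at hk
    · rw [Real.dist_eq] at hk; norm_num at hk
  have haeP : ∀ᵐ p ∂((volume : Measure (Euc n)).prod volume),
      (∀ᶠ k in atTop, (p.1 ∈ E (ns k) ↔ p.1 ∈ E₀)) ∧
      (∀ᶠ k in atTop, (p.2 ∈ E (ns k) ↔ p.2 ∈ E₀)) :=
    OutMinAux.ae_prod_pair hae'
  -- the per-index inequality, in product form
  have hkm : ∀ k, OutMinAux.pint K (E (ns k) ×ˢ (D \ E (ns k)))
      ≤ OutMinAux.pint K ((D \ E (ns k)) ×ˢ (E (ns k) ∪ D)ᶜ) := by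
    intro k
    have hDkm : MeasurableSet (D \ E (ns k)) := hDm.diff (hEm _)
    have hdisjk : Disjoint (E (ns k)) (D \ E (ns k)) := by
      rw [Set.disjoint_left]
      exact fun x hx hx2 => hx2.2 hx
    have hcptk : CptIn (D \ E (ns k)) Ω :=
      ⟨IsCompact.of_isClosed_subset hcpt.1 isClosed_closure (closure_mono diff_subset),
        (closure_mono diff_subset).trans hcpt.2⟩
    have h := OutMinAux.outMin_key hKmeas (hmin (ns k)) (hEm _) hΩm (hfin _)
      hDkm hdisjk hcptk
    rw [Set.union_diff_self] at h
    rwa [OutMinAux.interK_eq_pint K hKmeas (hEm _) hDkm,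
      OutMinAux.interK_eq_pint K hKmeas hDkm ((hEm _).union hDm).compl] at h
  -- Fatou for the left-hand sides
  set π := (volume : Measure (Euc n)).prod (volume : Measure (Euc n)) with hπ
  set f : ℕ → Euc n × Euc n → ℝ≥0∞ :=
    fun k => ((E (ns k)) ×ˢ (D \ E (ns k))).indicator (OutMinAux.KK K) with hfdef
  set g : Euc n × Euc n → ℝ≥0∞ := (E₀ ×ˢ D).indicator (OutMinAux.KK K) with hgdef
  have hfconv : ∀ᵐ p ∂π, Tendsto (fun k => f k p) atTop (𝓝 (g p)) := by
    filter_upwards [haeP] with p hp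
    obtain ⟨h1, h2⟩ := hp
    have hevc : ∀ᶠ k in atTop, f k p = g p := by
      filter_upwards [h1, h2] with k hk1 hk2
      simp only [hfdef, hgdef]
      by_cases hq : p ∈ E₀ ×ˢ D
      · have : p ∈ (E (ns k)) ×ˢ (D \ E (ns k)) :=
          ⟨hk1.2 hq.1, hq.2, fun hc => (disjoint_left.1 hDdisj (hk2.1 hc) hq.2)⟩
        rw [indicator_of_mem this, indicator_of_mem hq]
      · have : p ∉ (E (ns k)) ×ˢ (D \ E (ns k)) := by
          intro hc
          exact hq ⟨hk1.1 hc.1, hc.2.1⟩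
        rw [indicator_of_notMem this, indicator_of_notMem hq]
    exact Tendsto.congr' (hevc.mono fun k hk => hk.symm) tendsto_const_nhds
  have hfmeas : ∀ k, Measurable (f k) := fun k =>
    (OutMinAux.measKK K hKmeas).indicator ((hEm _).prod (hDm.diff (hEm _)))
  have hFatou : OutMinAux.pint K (E₀ ×ˢ D)
      ≤ atTop.liminf fun k => OutMinAux.pint K (E (ns k) ×ˢ (D \ E (ns k))) := by
    have e1 : OutMinAux.pint K (E₀ ×ˢ D) = ∫⁻ p, g p ∂π := rfl
    have e2 : (∫⁻ p, g p ∂π) = ∫⁻ p, atTop.liminf (fun k => f k p) ∂π :=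
      lintegral_congr_ae (hfconv.mono fun p hp => hp.liminf_eq.symm)
    rw [e1, e2]
    exact lintegral_liminf_le hfmeas
  -- dominated convergence for the right-hand sides
  set h : ℕ → Euc n × Euc n → ℝ≥0∞ :=
    fun k => ((D \ E (ns k)) ×ˢ (E (ns k) ∪ D)ᶜ).indicator (OutMinAux.KK K) with hhdef
  set bound : Euc n × Euc n → ℝ≥0∞ :=
    (D ×ˢ (Fᶜ ∪ E₀)).indicator (OutMinAux.KK K) with hbdef
  have hDcompl : Dᶜ = Fᶜ ∪ E₀ := by
    ext x
    simp only [hDdef, mem_compl_iff, mem_diff, not_and, not_not, mem_union]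
    constructor
    · intro hx
      by_cases hxF : x ∈ F
      · exact Or.inr (hx hxF)
      · exact Or.inl hxF
    · rintro (hx | hx) hxF
      · exact absurd hxF hx
      · exact hx
  have hhmeas : ∀ k, Measurable (h k) := fun k =>
    (OutMinAux.measKK K hKmeas).indicator
      ((hDm.diff (hEm _)).prod ((hEm _).union hDm).compl)
  have hbound : ∀ k, h k ≤ᵐ[π] bound := by
    intro k
    refine Filter.Eventually.of_forall fun p => ?_
    refine indicator_le_indicator_of_subset ?_ (fun _ => zero_le) p
    rintro ⟨x, y⟩ ⟨hx, hy⟩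
    refine ⟨hx.1, ?_⟩
    rw [← hDcompl]
    exact fun hc => hy (Or.inr hc)
  have hboundfin : (∫⁻ p, bound p ∂π) ≠ ⊤ := by
    have hsplit : (∫⁻ p, bound p ∂π)
        = OutMinAux.pint K (D ×ˢ Fᶜ) + OutMinAux.pint K (D ×ˢ E₀) := by
      rw [hbdef]
      show OutMinAux.pint K (D ×ˢ (Fᶜ ∪ E₀)) = _
      rw [prod_union]
      refine OutMinAux.pint_union hKmeas (hDm.prod hF.compl) ?_
      rw [Set.disjoint_left]
      rintro ⟨x, y⟩ h1 h2
      exact h1.2 (hEF h2.2)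
    rw [hsplit]
    refine ENNReal.add_ne_top.2 ⟨?_, ?_⟩
    · rw [← OutMinAux.interK_eq_pint K hKmeas hDm hF.compl]
      exact hDF
    · rw [← OutMinAux.interK_eq_pint K hKmeas hDm hE₀,
        ← OutMinAux.interK_symm hKmeas hKeven hE₀ hDm]
      exact hED_fin.ne
  have hhconv : ∀ᵐ p ∂π,
      Tendsto (fun k => h k p) atTop (𝓝 ((D ×ˢ Fᶜ).indicator (OutMinAux.KK K) p)) := by
    filter_upwards [haeP] with p hp
    obtain ⟨h1, h2⟩ := hp
    have hevc : ∀ᶠ k in atTop, h k p = (D ×ˢ Fᶜ).indicator (OutMinAux.KK K) p := by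
      filter_upwards [h1, h2] with k hk1 hk2
      simp only [hhdef]
      by_cases hq : p ∈ D ×ˢ Fᶜ
      · have hp1 : p.1 ∈ D \ E (ns k) :=
          ⟨hq.1, fun hc => disjoint_left.1 hDdisj (hk1.1 hc) hq.1⟩
        have hp2 : p.2 ∈ (E (ns k) ∪ D)ᶜ := by
          rintro (hc | hc)
          · exact hq.2 (hFeq ▸ Or.inl (hk2.1 hc))
          · exact hq.2 (hFeq ▸ Or.inr hc)
        have hmemp : p ∈ (D \ E (ns k)) ×ˢ (E (ns k) ∪ D)ᶜ := Set.mem_prod.2 ⟨hp1, hp2⟩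
        rw [indicator_of_mem hmemp, indicator_of_mem hq]
      · have : p ∉ (D \ E (ns k)) ×ˢ (E (ns k) ∪ D)ᶜ := by
          rintro ⟨hp1, hp2⟩
          refine hq ⟨hp1.1, ?_⟩
          rw [hFeq]
          rintro (hc | hc)
          · exact hp2 (Or.inl (hk2.2 hc))
          · exact hp2 (Or.inr hc)
        rw [indicator_of_notMem this, indicator_of_notMem hq]
    exact Tendsto.congr' (hevc.mono fun k hk => hk.symm) tendsto_const_nhds
  have hDCT : Tendsto (fun k => OutMinAux.pint K ((D \ E (ns k)) ×ˢ (E (ns k) ∪ D)ᶜ))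
      atTop (𝓝 (OutMinAux.pint K (D ×ˢ Fᶜ))) :=
    tendsto_lintegral_of_dominated_convergence bound hhmeas hbound hboundfin hhconv
  -- combine everything
  have hliminf : atTop.liminf (fun k => OutMinAux.pint K (E (ns k) ×ˢ (D \ E (ns k))))
      ≤ OutMinAux.pint K (D ×ˢ Fᶜ) := by
    rw [← hDCT.liminf_eq]
    exact liminf_le_liminf (Filter.Eventually.of_forall hkm)
  calc OutMinAux.interK K E₀ D
      = OutMinAux.pint K (E₀ ×ˢ D) := OutMinAux.interK_eq_pint K hKmeas hE₀ hDm
    _ ≤ atTop.liminf fun k => OutMinAux.pint K (E (ns k) ×ˢ (D \ E (ns k))) := hFatou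
    _ ≤ OutMinAux.pint K (D ×ˢ Fᶜ) := hliminf
    _ = OutMinAux.interK K D Fᶜ := (OutMinAux.interK_eq_pint K hKmeas hDm hF.compl).symm
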